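/- Define f : [0,1] → 2^[0,1] by f(x) = {0, x} for 0 ≤ x ≤ 1/4, f(x) = {0} for 1/4 < x < 1, and f(1) = [0,1]. Then f is upper semicontinuous, surjective, has connected graph, but does not have the Weak Intermediate Value Property: taking x₁ = 1/4, y₁ = 1/4, x₂ = 1/2, the only y₂ ∈ f(x₂) is 0, yet 1/8 ∉ f(x) for all x ∈ [1/4, 1/2]. -/

import Mathlib

open Set

/-- Graph of a set-valued function on [0,1]. -/
def SVGraph (f : ℝ → Set ℝ) : Set (ℝ × ℝ) :=
  {p | p.1 ∈ Icc (0:ℝ) 1 ∧ p.2 ∈ f p.1}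

/-- f has nonempty compact values contained in [0,1]. -/
def SV (f : ℝ → Set ℝ) : Prop :=
  ∀ x ∈ Icc (0:ℝ) 1, (f x).Nonempty ∧ IsCompact (f x) ∧ f x ⊆ Icc (0:ℝ) 1

/-- Upper semicontinuity on [0,1]. -/
def USC (f : ℝ → Set ℝ) : Prop :=
  ∀ x ∈ Icc (0:ℝ) 1, ∀ U : Set ℝ, IsOpen U → f x ⊆ U →
    ∃ V : Set ℝ, IsOpen V ∧ x ∈ V ∧ ∀ v ∈ V ∩ Icc (0:ℝ) 1, f v ⊆ U

/-- Weak Intermediate Value Property. -/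
def WIVP (f : ℝ → Set ℝ) : Prop :=
  ∀ x₁ ∈ Icc (0:ℝ) 1, ∀ x₂ ∈ Icc (0:ℝ) 1, x₁ ≠ x₂ → ∀ y₁ ∈ f x₁,
    ∃ y₂ ∈ f x₂, ∀ y ∈ uIcc y₁ y₂, ∃ x ∈ uIcc x₁ x₂, y ∈ f x

/-- Intermediate Value Property. -/
def IVP (f : ℝ → Set ℝ) : Prop :=
  ∀ x₁ ∈ Icc (0:ℝ) 1, ∀ x₂ ∈ Icc (0:ℝ) 1, x₁ ≠ x₂ → ∀ y₁ ∈ f x₁, ∀ y₂ ∈ f x₂, y₁ ≠ y₂ →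
    ∀ y ∈ Ioo (min y₁ y₂) (max y₁ y₂), ∃ x ∈ Ioo (min x₁ x₂) (max x₁ x₂), y ∈ f x

noncomputable def fIngram (x : ℝ) : Set ℝ :=
  if x ≤ 1/4 then {0, x} else if x < 1 then {0} else Icc 0 1

lemma fI_le {x : ℝ} (h : x ≤ 1/4) : fIngram x = {0, x} := by
  unfold fIngram; rw [if_pos h]

lemma fI_mid {x : ℝ} (h1 : ¬ x ≤ 1/4) (h2 : x < 1) : fIngram x = {0} := by
  unfold fIngram; rw [if_neg h1, if_pos h2]

lemma fI_one : fIngram 1 = Icc 0 1 := by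
  norm_num [fIngram]

lemma fI_zero_mem {x : ℝ} (hx : x ∈ Icc (0:ℝ) 1) : (0:ℝ) ∈ fIngram x := by
  by_cases h : x ≤ 1/4
  · rw [fI_le h]; left; rfl
  · by_cases h2 : x < 1
    · rw [fI_mid h h2]; rfl
    · have : x = 1 := le_antisymm hx.2 (not_lt.mp h2)
      rw [this, fI_one]; exact ⟨le_refl _, zero_le_one⟩

lemma fI_sub {x : ℝ} (hx : x ∈ Icc (0:ℝ) 1) : fIngram x ⊆ Icc (0:ℝ) 1 := by
  by_cases h : x ≤ 1/4
  · rw [fI_le h]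
    intro y hy
    rcases hy with rfl | rfl
    · exact ⟨le_refl _, zero_le_one⟩
    · exact hx
  · by_cases h2 : x < 1
    · rw [fI_mid h h2]
      intro y hy
      rw [mem_singleton_iff] at hy
      subst hy
      exact ⟨le_refl _, zero_le_one⟩
    · have : x = 1 := le_antisymm hx.2 (not_lt.mp h2)
      rw [this, fI_one]

theorem stmt12 :
    USC fIngram ∧
    (∀ y ∈ Icc (0:ℝ) 1, ∃ x ∈ Icc (0:ℝ) 1, y ∈ fIngram x) ∧
    IsConnected (SVGraph fIngram) ∧
    ¬ WIVP fIngram ∧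
    fIngram (1/2) = {0} ∧
    (∀ x ∈ Icc (1/4 : ℝ) (1/2), (1/8 : ℝ) ∉ fIngram x) := by
  have hmid : ∀ x ∈ Icc (1/4 : ℝ) (1/2), (1/8 : ℝ) ∉ fIngram x := by
    intro x hx hmem
    by_cases h : x ≤ 1/4
    · rw [fI_le h] at hmem
      have hx4 : x = 1/4 := le_antisymm h hx.1
      rcases hmem with h1 | h1 <;> rw [hx4] at * <;> norm_num at h1
    · have h2 : x < 1 := lt_of_le_of_lt hx.2 (by norm_num)
      rw [fI_mid h h2] at hmem
      norm_num at hmem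
  refine ⟨?_, ?_, ?_, ?_, ?_, hmid⟩
  · -- USC
    intro x hx U hU hfU
    by_cases h1 : x < 1/4
    · refine ⟨U ∩ Iio (1/4), hU.inter isOpen_Iio, ⟨hfU ?_, h1⟩, ?_⟩
      · rw [fI_le h1.le]; right; rfl
      · intro v ⟨⟨hvU, hv4⟩, _⟩
        rw [fI_le (le_of_lt hv4)]
        intro y hy
        rcases hy with rfl | rfl
        · exact hfU (by rw [fI_le h1.le]; left; rfl)
        · exact hvU
    · by_cases h2 : x ≤ 1/4
      · -- x = 1/4
        have hx4 : x = 1/4 := le_antisymm h2 (not_lt.mp h1)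
        have h0U : (0:ℝ) ∈ U := hfU (by rw [fI_le h2]; left; rfl)
        refine ⟨(U ∪ Ioi (1/4)) ∩ Iio 1, ((hU.union isOpen_Ioi).inter isOpen_Iio),
          ⟨Or.inl (hfU (by rw [fI_le h2]; right; exact hx4.symm ▸ rfl)), by rw [hx4]; norm_num⟩, ?_⟩
        intro v ⟨⟨hvu, hv1⟩, _⟩
        by_cases hv4 : v ≤ 1/4
        · rw [fI_le hv4]
          intro y hy
          rcases hy with rfl | rfl
          · exact h0U
          · rcases hvu with h | h
            · exact h
            · exact absurd h (not_lt.mpr hv4)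
        · rw [fI_mid hv4 hv1]
          intro y hy
          rw [mem_singleton_iff] at hy
          subst hy; exact h0U
      · by_cases h3 : x < 1
        · -- mid case
          have h0U : (0:ℝ) ∈ U := hfU (by rw [fI_mid h2 h3]; rfl)
          refine ⟨Ioo (1/4) 1, isOpen_Ioo, ⟨not_le.mp h2, h3⟩, ?_⟩
          intro v ⟨⟨hv4, hv1⟩, _⟩
          rw [fI_mid (not_le.mpr hv4) hv1]
          intro y hy
          rw [mem_singleton_iff] at hy
          subst hy; exact h0U
        · -- x = 1
          have hx1 : x = 1 := le_antisymm hx.2 (not_lt.mp h3)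
          refine ⟨univ, isOpen_univ, mem_univ _, ?_⟩
          intro v ⟨_, hv⟩
          exact (fI_sub hv).trans (by rw [hx1, fI_one] at hfU; exact hfU)
  · -- surjective
    intro y hy
    exact ⟨1, ⟨zero_le_one, le_refl _⟩, by rw [fI_one]; exact hy⟩
  · -- connected
    have hgraph : SVGraph fIngram =
        ((fun t : ℝ => (t, t)) '' Icc 0 (1/4) ∪ Icc (0:ℝ) 1 ×ˢ ({0} : Set ℝ)) ∪
          ({1} : Set ℝ) ×ˢ Icc (0:ℝ) 1 := by
      ext ⟨x, y⟩
      constructor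
      · rintro ⟨hx, hy⟩
        by_cases h : x ≤ 1/4
        · rw [fI_le h] at hy
          rcases hy with hy | hy
          · obtain rfl : y = 0 := hy
            exact Or.inl (Or.inr ⟨hx, rfl⟩)
          · exact Or.inl (Or.inl ⟨x, ⟨hx.1, h⟩, by rw [show y = x from hy]⟩)
        · by_cases h2 : x < 1
          · rw [fI_mid h h2] at hy
            obtain rfl : y = 0 := hy
            exact Or.inl (Or.inr ⟨hx, rfl⟩)
          · have : x = 1 := le_antisymm hx.2 (not_lt.mp h2)
            subst this
            rw [fI_one] at hy
            exact Or.inr ⟨rfl, hy⟩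
      · rintro ((⟨t, ht, heq⟩ | ⟨hx, hy⟩) | ⟨hx, hy⟩)
        · obtain rfl : t = x := congrArg Prod.fst heq
          obtain rfl : t = y := congrArg Prod.snd heq
          refine ⟨⟨ht.1, ht.2.trans (by norm_num)⟩, ?_⟩
          rw [fI_le ht.2]; right; rfl
        · obtain rfl : y = 0 := hy
          exact ⟨hx, fI_zero_mem hx⟩
        · rw [mem_singleton_iff] at hx
          subst hx
          exact ⟨⟨zero_le_one, le_refl _⟩, by rw [fI_one]; exact hy⟩
    rw [hgraph]
    have hA : IsConnected ((fun t : ℝ => (t, t)) '' Icc 0 (1/4)) :=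
      (isConnected_Icc (by norm_num)).image _
        ((continuous_id.prodMk continuous_id).continuousOn)
    have hB : IsConnected (Icc (0:ℝ) 1 ×ˢ ({0} : Set ℝ)) :=
      (isConnected_Icc zero_le_one).prod isConnected_singleton
    have hC : IsConnected (({1} : Set ℝ) ×ˢ Icc (0:ℝ) 1) :=
      isConnected_singleton.prod (isConnected_Icc zero_le_one)
    have hAB : IsConnected ((fun t : ℝ => (t, t)) '' Icc 0 (1/4) ∪ Icc (0:ℝ) 1 ×ˢ ({0} : Set ℝ)) := by
      apply IsConnected.union _ hA hB
      exact ⟨(0, 0), ⟨0, ⟨le_refl _, by norm_num⟩, rfl⟩, ⟨⟨le_refl _, zero_le_one⟩, rfl⟩⟩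
    apply IsConnected.union _ hAB hC
    exact ⟨(1, 0), Or.inr ⟨⟨zero_le_one, le_refl _⟩, rfl⟩, ⟨rfl, le_refl _, zero_le_one⟩⟩
  · -- not WIVP
    intro hW
    have h14 : (1/4 : ℝ) ∈ Icc (0:ℝ) 1 := by norm_num
    have h12 : (1/2 : ℝ) ∈ Icc (0:ℝ) 1 := by norm_num
    have hy1 : (1/4 : ℝ) ∈ fIngram (1/4) := by rw [fI_le (le_refl _)]; right; rfl
    obtain ⟨y₂, hy₂, hall⟩ := hW (1/4) h14 (1/2) h12 (by norm_num) (1/4) hy1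
    have hy₂0 : y₂ = 0 := by
      rw [fI_mid (by norm_num) (by norm_num)] at hy₂
      exact hy₂
    subst hy₂0
    have h18 : (1/8 : ℝ) ∈ uIcc (1/4 : ℝ) (0 : ℝ) := by
      rw [uIcc_of_ge (by norm_num)]
      constructor <;> norm_num
    obtain ⟨x, hx, hmem⟩ := hall (1/8) h18
    rw [uIcc_of_le (by norm_num)] at hx
    exact hmid x hx hmem
  · -- f(1/2) = {0}
    exact fI_mid (by norm_num) (by norm_num)
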